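/- If the weighted digraph D(γ) of a scoring matrix γ contains a cycle of negative total weight, then there exists a sequence s over Σ such that the weighted edit distance dist_γ(s, s) is negative. -/

import Mathlib

open List

/-- A scoring matrix on alphabet `σ`; `none` represents the space symbol `‐`.
The value at `(none, none)` is irrelevant (never used on admissible columns). -/
abbrev Scoring (σ : Type*) := Option σ → Option σ → ℝ

/-- `A` is an alignment of the sequences `s` and `t`: a list of columns over
`Σ₋ × Σ₋` with no column `(‐,‐)`, whose first (resp. second) components with
spaces removed spell `s` (resp. `t`). -/
def IsAlignment {σ : Type*} (A : List (Option σ × Option σ)) (s t : List σ) : Prop :=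
  (∀ c ∈ A, c ≠ ((none : Option σ), (none : Option σ))) ∧
  A.filterMap Prod.fst = s ∧ A.filterMap Prod.snd = t

/-- The score of an alignment: the sum of `γ` over its columns. -/
def alignScore {σ : Type*} (γ : Scoring σ) (A : List (Option σ × Option σ)) : ℝ :=
  (A.map fun c => γ c.1 c.2).sum

/-- The weighted edit distance: minimum alignment score. -/
noncomputable def editDist {σ : Type*} (γ : Scoring σ) (s t : List σ) : ℝ :=
  sInf {x | ∃ A, IsAlignment A s t ∧ alignScore γ A = x}

/-- The normalized edit distance: minimum normalized alignment score
(score divided by number of columns); for `s = t = ε` it is `0`. -/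
noncomputable def ndist {σ : Type*} (γ : Scoring σ) (s t : List σ) : ℝ :=
  sInf {x | ∃ A, IsAlignment A s t ∧ alignScore γ A / (A.length : ℝ) = x}

/-- A walk in the digraph `D(γ)`: a list of vertices of `Σ₋` in which the
space `‐` never follows the space. -/
def IsWalkSeq {σ : Type*} (W : List (Option σ)) : Prop :=
  W.Chain' (fun a b => ¬(a = none ∧ b = none))

/-- The weight of a walk: the sum of the weights of its consecutive arcs. -/
def walkWeight {σ : Type*} (γ : Scoring σ) (W : List (Option σ)) : ℝ :=
  ((W.zip W.tail).map fun p => γ p.1 p.2).sum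

/-- `D(γ)` has a cycle of negative total weight (cycles start and end at a
vertex of `Σ`). -/
def HasNegCycle {σ : Type*} (γ : Scoring σ) : Prop :=
  ∃ (a : σ) (W : List (Option σ)),
    IsWalkSeq (some a :: (W ++ [some a])) ∧
    walkWeight γ (some a :: (W ++ [some a])) < 0

/-- The shortest-walk distance from `x` to `y` in `D(γ)`. -/
noncomputable def walkDist {σ : Type*} (γ : Scoring σ) (x y : Option σ) : ℝ :=
  sInf {w | ∃ W : List (Option σ), IsWalkSeq W ∧ W.head? = some x ∧
    W.getLast? = some y ∧ walkWeight γ W = w}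

/-- A column of an extended alignment: a nonempty sequence over `Σ₋`, with at
least one non-space symbol, no two consecutive spaces, and not having a space
at both ends. -/
def IsExtCol {σ : Type*} (c : List (Option σ)) : Prop :=
  c ≠ [] ∧ (∃ x ∈ c, x ≠ none) ∧
  c.Chain' (fun a b => ¬(a = none ∧ b = none)) ∧
  ¬(c.head? = some none ∧ c.getLast? = some none)

/-- An extended alignment of `s, t`: a list of admissible columns whose first
symbols (spaces removed) spell `s` and whose last symbols spell `t`. -/
def IsExtAlignment {σ : Type*} (E : List (List (Option σ))) (s t : List σ) : Prop :=
  (∀ c ∈ E, IsExtCol c) ∧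
  E.filterMap (fun c => c.head?.bind id) = s ∧
  E.filterMap (fun c => c.getLast?.bind id) = t

/-- The extended edit distance: minimum total score over extended alignments,
where the score of a column is the sum of `γ` over its consecutive pairs. -/
noncomputable def edist {σ : Type*} (γ : Scoring σ) (s t : List σ) : ℝ :=
  sInf {x | ∃ E, IsExtAlignment E s t ∧ (E.map (walkWeight γ)).sum = x}

/-- `f` is a premetric: `f x x = 0` and `f x y ≥ 0`. -/
def IsPremetric {σ : Type*} (f : List σ → List σ → ℝ) : Prop :=
  (∀ s, f s s = 0) ∧ (∀ s t, 0 ≤ f s t)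

-- helper lemmas

lemma map_fst_cols {σ : Type*} : ∀ V : List (Option σ),
    (V.zip V.tail).map Prod.fst = V.dropLast
  | [] => rfl
  | [_] => rfl
  | x :: y :: l => by
    have ih := map_fst_cols (y :: l)
    simp only [List.tail_cons] at ih ⊢
    show ((x, y) :: ((y :: l).zip l)).map Prod.fst = (x :: y :: l).dropLast
    rw [List.map_cons, ih]
    rfl

lemma chain'_cols {σ : Type*} {R : Option σ → Option σ → Prop} :
    ∀ V : List (Option σ), V.Chain' R → ∀ p ∈ V.zip V.tail, R p.1 p.2
  | [] , _, p, hp => by simp at hp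
  | [_], _, p, hp => by simp at hp
  | x :: y :: l, h, p, hp => by
    replace h := List.isChain_cons_cons.mp h
    have : p ∈ ((x, y) :: ((y :: l).zip l)) := hp
    rcases List.mem_cons.mp this with rfl | hm
    · exact h.1
    · exact chain'_cols (y :: l) h.2 p hm

lemma len_le_filterMaps {σ : Type*} : ∀ A : List (Option σ × Option σ),
    (∀ c ∈ A, c ≠ ((none : Option σ), (none : Option σ))) →
    A.length ≤ (A.filterMap Prod.fst).length + (A.filterMap Prod.snd).length
  | [], _ => by simp
  | ⟨x, y⟩ :: A, h => by
    have ih := len_le_filterMaps A (fun c hc => h c (List.mem_cons_of_mem _ hc))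
    have hxy := h ⟨x, y⟩ List.mem_cons_self
    cases x <;> cases y <;> simp_all [List.filterMap_cons] <;> omega

lemma key_shift {σ : Type*} (a : σ) (u : List σ) : ∀ m : ℕ,
    a :: (List.replicate m (u ++ [a])).flatten = (List.replicate m (a :: u)).flatten ++ [a]
  | 0 => rfl
  | m + 1 => by
    simp only [List.replicate_succ, List.flatten_cons]
    rw [show a :: ((u ++ [a]) ++ (List.replicate m (u ++ [a])).flatten)
        = (a :: u) ++ (a :: (List.replicate m (u ++ [a])).flatten) by simp]
    rw [key_shift a u m]
    simp

theorem stmt0 {σ : Type*} [Fintype σ] (γ : Scoring σ) (h : HasNegCycle γ) :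
    ∃ s : List σ, editDist γ s s < 0 := by
  obtain ⟨a, W, hwalk, hw⟩ := h
  set P : List (Option σ) := some a :: (W ++ [some a]) with hP
  set B : List (Option σ × Option σ) := P.zip P.tail with hBdef
  set w : ℝ := walkWeight γ P with hwdef
  set u : List σ := W.filterMap id with hu
  -- basic facts about B
  have hBcol : ∀ c ∈ B, c ≠ ((none : Option σ), (none : Option σ)) := by
    intro c hc
    have := chain'_cols P hwalk c hc
    intro hcn
    exact this ⟨by rw [hcn], by rw [hcn]⟩
  have hBfst : B.filterMap Prod.fst = a :: u := by
    have h1 : B.map Prod.fst = P.dropLast := map_fst_cols P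
    have h2 : P.dropLast = some a :: W := by
      rw [hP]
      rw [show (some a :: (W ++ [some a])) = (some a :: W) ++ [some a] by simp]
      rw [List.dropLast_concat]
    have : B.filterMap Prod.fst = (B.map Prod.fst).filterMap id := by
      rw [List.filterMap_map]; rfl
    rw [this, h1, h2]
    simp [hu]
  have hBsnd : B.filterMap Prod.snd = u ++ [a] := by
    have h1 : B.map Prod.snd = P.tail := by
      apply List.map_snd_zip
      cases P <;> simp
    have : B.filterMap Prod.snd = (B.map Prod.snd).filterMap id := by
      rw [List.filterMap_map]; rfl
    rw [this, h1, hP]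
    simp [hu]
  have hBscore : alignScore γ B = w := rfl
  -- pick a lower bound M for γ
  obtain ⟨M, hM⟩ : ∃ M : ℝ, ∀ p : Option σ × Option σ, M ≤ γ p.1 p.2 := by
    obtain ⟨M, hM⟩ := (Set.finite_range (fun p : Option σ × Option σ => γ p.1 p.2)).bddBelow
    exact ⟨M, fun p => hM (Set.mem_range_self p)⟩
  set M' : ℝ := min M 0 with hM'
  have hM'le : ∀ p : Option σ × Option σ, M' ≤ γ p.1 p.2 :=
    fun p => le_trans (min_le_left _ _) (hM p)
  have hM'0 : M' ≤ 0 := min_le_right _ _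
  -- choose m
  have hwneg : w < 0 := hw
  obtain ⟨m, hm⟩ := exists_nat_gt ((γ none (some a) + γ (some a) none) / (-w))
  have hmw : γ none (some a) + (m * w + γ (some a) none) < 0 := by
    have h1 : (γ none (some a) + γ (some a) none) < m * (-w) := by
      rw [div_lt_iff₀ (by linarith)] at hm
      exact hm
    nlinarith
  -- construct the alignment
  set Am : List (Option σ × Option σ) := (List.replicate m B).flatten with hAm
  set sm : List σ := (List.replicate m (a :: u)).flatten with hsm
  set tm : List σ := (List.replicate m (u ++ [a])).flatten with htm
  have hAmfst : Am.filterMap Prod.fst = sm := by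
    rw [hAm, List.filterMap_flatten, List.map_replicate, hBfst, hsm]
  have hAmsnd : Am.filterMap Prod.snd = tm := by
    rw [hAm, List.filterMap_flatten, List.map_replicate, hBsnd, htm]
  have hAmscore : alignScore γ Am = m * w := by
    rw [hAm, alignScore, List.map_flatten, List.sum_flatten, List.map_replicate,
      List.map_replicate]
    rw [show ((B.map fun c => γ c.1 c.2).sum) = w from hBscore]
    simp [List.sum_replicate, nsmul_eq_mul]
  have hAmcol : ∀ c ∈ Am, c ≠ ((none : Option σ), (none : Option σ)) := by
    intro c hc
    rw [hAm, List.mem_flatten] at hc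
    obtain ⟨l, hl, hcl⟩ := hc
    rw [List.eq_of_mem_replicate hl] at hcl
    exact hBcol c hcl
  set A : List (Option σ × Option σ) :=
    ((none : Option σ), some a) :: (Am ++ [(some a, (none : Option σ))]) with hA
  set s : List σ := sm ++ [a] with hs
  have hAlign : IsAlignment A s s := by
    refine ⟨?_, ?_, ?_⟩
    · intro c hc
      rw [hA, List.mem_cons, List.mem_append, List.mem_singleton] at hc
      rcases hc with rfl | hc | rfl
      · simp
      · exact hAmcol c hc
      · simp
    · rw [hA, List.filterMap_cons, List.filterMap_append]
      simp only [List.filterMap_cons]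
      show Am.filterMap Prod.fst ++ [a] = s
      rw [hAmfst, hs]
    · rw [hA, List.filterMap_cons, List.filterMap_append]
      show a :: (Am.filterMap Prod.snd ++ List.filterMap Prod.snd [(some a, none)]) = s
      rw [hAmsnd]
      simp only [List.filterMap_cons, List.filterMap_nil]
      rw [show tm ++ [] = tm from List.append_nil tm]
      rw [hs, hsm, htm]
      exact key_shift a u m
  have hScore : alignScore γ A = γ none (some a) + (m * w + γ (some a) none) := by
    rw [hA, alignScore]
    simp only [List.map_cons, List.map_append, List.sum_cons, List.sum_append,
      List.map_nil, List.sum_nil]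
    rw [show ((Am.map fun c => γ c.1 c.2).sum) = m * w from hAmscore]
    simp
  -- bounded below
  have hbdd : BddBelow {x : ℝ | ∃ A', IsAlignment A' s s ∧ alignScore γ A' = x} := by
    refine ⟨(s.length + s.length : ℕ) * M', ?_⟩
    rintro x ⟨A', ⟨hc, hf, hsnd⟩, rfl⟩
    have hlen : A'.length ≤ s.length + s.length := by
      have := len_le_filterMaps A' hc
      rw [hf, hsnd] at this
      exact this
    have h1 : A'.length • M' ≤ alignScore γ A' := by
      have := List.card_nsmul_le_sum (A'.map fun c => γ c.1 c.2) M' ?_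
      · rwa [List.length_map] at this
      · intro x hx
        rw [List.mem_map] at hx
        obtain ⟨c, _, rfl⟩ := hx
        exact hM'le c
    have h2 : ((s.length + s.length : ℕ) : ℝ) * M' ≤ (A'.length : ℝ) * M' := by
      apply mul_le_mul_of_nonpos_right _ hM'0
      exact_mod_cast hlen
    calc ((s.length + s.length : ℕ) : ℝ) * M' ≤ (A'.length : ℝ) * M' := h2
      _ = A'.length • M' := (nsmul_eq_mul _ _).symm
      _ ≤ alignScore γ A' := h1
  refine ⟨s, lt_of_le_of_lt (csInf_le hbdd ⟨A, hAlign, rfl⟩) ?_⟩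
  rw [hScore]
  exact hmw
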